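/- There exists a constant C > 0, depending only on n, γ, the weights w and the constants c₁, c₂, but not on u, such that for every u ∈ ℝⁿ the modified Newton direction d at u satisfies ‖d‖₂ ≤ C·‖F(u)‖₂. -/

import Mathlib

open scoped RealInnerProductSpace
open Filter Topology

noncomputable section

abbrev Euc (n : ℕ) := EuclideanSpace ℝ (Fin n)

variable {n : ℕ}

/-- Componentwise soft-thresholding operator `(S_{γw}(v))_k = sgn(v_k)·max(|v_k| − γw_k, 0)`. -/
def soft (γ : ℝ) (w : Fin n → ℝ) (v : Euc n) : Euc n :=
  WithLp.toLp 2 (fun k => Real.sign (v k) * max (|v k| - γ * w k) 0)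

/-- The map `F(u) = u − S_{γw}(u − γ∇g(u))`. -/
def Fm (g : Euc n → ℝ) (γ : ℝ) (w : Fin n → ℝ) (u : Euc n) : Euc n :=
  u - soft γ w (u - γ • gradient g u)

/-- The merit functional `Θ(u) = ‖F(u)‖₂²`. -/
def Th (g : Euc n → ℝ) (γ : ℝ) (w : Fin n → ℝ) (u : Euc n) : ℝ :=
  ‖Fm g γ w u‖ ^ 2

/-- The Hessian of `g` at `u`, applied to `d`: `∇²g(u)d`. -/
def hess (g : Euc n → ℝ) (u d : Euc n) : Euc n :=
  fderiv ℝ (gradient g) u d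

/-- Standing assumptions on `g`: twice continuously differentiable, Lipschitz continuous
second derivative, and uniform bounds `c₁‖h‖² ≤ ⟨∇²g(u)h, h⟩ ≤ c₂‖h‖²`. -/
structure Assump (n : ℕ) (g : Euc n → ℝ) (c₁ c₂ : ℝ) : Prop where
  contDiff : ContDiff ℝ 2 g
  lipHess : ∃ L : NNReal, LipschitzWith L fun u => fderiv ℝ (gradient g) u
  c1_pos : 0 < c₁
  c1_le_c2 : c₁ ≤ c₂
  lower : ∀ u h : Euc n, c₁ * ‖h‖ ^ 2 ≤ ⟪hess g u h, h⟫
  upper : ∀ u h : Euc n, ⟪hess g u h, h⟫ ≤ c₂ * ‖h‖ ^ 2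

/-- `A⁺(u)`. -/
def Ap (g : Euc n → ℝ) (γ : ℝ) (w : Fin n → ℝ) (u : Euc n) : Set (Fin n) :=
  {k | γ * gradient g u k + γ * w k < u k}

/-- `A⁻(u)`. -/
def Am (g : Euc n → ℝ) (γ : ℝ) (w : Fin n → ℝ) (u : Euc n) : Set (Fin n) :=
  {k | u k < γ * gradient g u k - γ * w k}

/-- `A(u) = A⁺(u) ∪ A⁻(u)`. -/
def Aset (g : Euc n → ℝ) (γ : ℝ) (w : Fin n → ℝ) (u : Euc n) : Set (Fin n) :=
  Ap g γ w u ∪ Am g γ w u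

/-- `I°(u)`. -/
def Iz (g : Euc n → ℝ) (γ : ℝ) (w : Fin n → ℝ) (u : Euc n) : Set (Fin n) :=
  {k | γ * gradient g u k - γ * w k < u k ∧ u k < γ * gradient g u k + γ * w k}

/-- `I⁺(u)`. -/
def Ipl (g : Euc n → ℝ) (γ : ℝ) (w : Fin n → ℝ) (u : Euc n) : Set (Fin n) :=
  {k | u k = γ * gradient g u k + γ * w k}

/-- `I⁻(u)`. -/
def Imi (g : Euc n → ℝ) (γ : ℝ) (w : Fin n → ℝ) (u : Euc n) : Set (Fin n) :=
  {k | u k = γ * gradient g u k - γ * w k}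

/-- `A⁺₊(u)`. -/
def App (g : Euc n → ℝ) (γ : ℝ) (w : Fin n → ℝ) (u : Euc n) : Set (Fin n) :=
  {k | γ * gradient g u k + γ * w k < u k ∧ u k < 0}

/-- `A⁻₋(u)`. -/
def Amm (g : Euc n → ℝ) (γ : ℝ) (w : Fin n → ℝ) (u : Euc n) : Set (Fin n) :=
  {k | 0 < u k ∧ u k < γ * gradient g u k - γ * w k}

/-- `I°₊(u)`. -/
def Izp (g : Euc n → ℝ) (γ : ℝ) (w : Fin n → ℝ) (u : Euc n) : Set (Fin n) :=
  {k | γ * gradient g u k - γ * w k < u k ∧ u k < γ * gradient g u k + γ * w k ∧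
    γ * gradient g u k + γ * w k < 0}

/-- `I°₋(u)`. -/
def Izm (g : Euc n → ℝ) (γ : ℝ) (w : Fin n → ℝ) (u : Euc n) : Set (Fin n) :=
  {k | 0 < γ * gradient g u k - γ * w k ∧ γ * gradient g u k - γ * w k < u k ∧
    u k < γ * gradient g u k + γ * w k}

/-- `Ā⁺(u) = A⁺(u) \ A⁺₊(u)`. -/
def ApBar (g : Euc n → ℝ) (γ : ℝ) (w : Fin n → ℝ) (u : Euc n) : Set (Fin n) :=
  Ap g γ w u \ App g γ w u

/-- `Ā⁻(u) = A⁻(u) \ A⁻₋(u)`. -/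
def AmBar (g : Euc n → ℝ) (γ : ℝ) (w : Fin n → ℝ) (u : Euc n) : Set (Fin n) :=
  Am g γ w u \ Amm g γ w u

/-- `Ā(u) = Ā⁺(u) ∪ Ā⁻(u)`. -/
def ABar (g : Euc n → ℝ) (γ : ℝ) (w : Fin n → ℝ) (u : Euc n) : Set (Fin n) :=
  ApBar g γ w u ∪ AmBar g γ w u

/-- `Ī°(u) = I°(u) \ (I°₊(u) ∪ I°₋(u))`. -/
def IzBar (g : Euc n → ℝ) (γ : ℝ) (w : Fin n → ℝ) (u : Euc n) : Set (Fin n) :=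
  Iz g γ w u \ (Izp g γ w u ∪ Izm g γ w u)

/-- `Ī⁺(u) = I⁺(u) ∪ A⁺₊(u) ∪ I°₊(u)`. -/
def IplBar (g : Euc n → ℝ) (γ : ℝ) (w : Fin n → ℝ) (u : Euc n) : Set (Fin n) :=
  Ipl g γ w u ∪ App g γ w u ∪ Izp g γ w u

/-- `Ī⁻(u) = I⁻(u) ∪ A⁻₋(u) ∪ I°₋(u)`. -/
def ImiBar (g : Euc n → ℝ) (γ : ℝ) (w : Fin n → ℝ) (u : Euc n) : Set (Fin n) :=
  Imi g γ w u ∪ Amm g γ w u ∪ Izm g γ w u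

/-- `d` is a modified Newton direction at `u`. -/
def IsModDir (g : Euc n → ℝ) (γ : ℝ) (w : Fin n → ℝ) (u d : Euc n) : Prop :=
  (∀ k ∈ ABar g γ w u, γ * hess g u d k = - Fm g γ w u k) ∧
  (∀ k ∈ IzBar g γ w u, d k = - u k) ∧
  (∀ k ∈ IplBar g γ w u, 0 ≤ d k + u k ∧ 0 ≤ γ * hess g u d k + Fm g γ w u k ∧
    (d k + u k) * (γ * hess g u d k + Fm g γ w u k) = 0) ∧
  (∀ k ∈ ImiBar g γ w u, d k + u k ≤ 0 ∧ γ * hess g u d k + Fm g γ w u k ≤ 0 ∧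
    (d k + u k) * (γ * hess g u d k + Fm g γ w u k) = 0)

/-- `d` is a B-Newton direction at `u` (unmodified index sets). -/
def IsBDir (g : Euc n → ℝ) (γ : ℝ) (w : Fin n → ℝ) (u d : Euc n) : Prop :=
  (∀ k ∈ Aset g γ w u, γ * hess g u d k = - Fm g γ w u k) ∧
  (∀ k ∈ Iz g γ w u, d k = - u k) ∧
  (∀ k ∈ Ipl g γ w u, 0 ≤ d k + u k ∧ 0 ≤ γ * hess g u d k + Fm g γ w u k ∧
    (d k + u k) * (γ * hess g u d k + Fm g γ w u k) = 0) ∧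
  (∀ k ∈ Imi g γ w u, d k + u k ≤ 0 ∧ γ * hess g u d k + Fm g γ w u k ≤ 0 ∧
    (d k + u k) * (γ * hess g u d k + Fm g γ w u k) = 0)

/-- `t = β^l` where `l` is the smallest nonnegative integer satisfying the Armijo inequality. -/
def ArmijoStepsize (g : Euc n → ℝ) (γ : ℝ) (w : Fin n → ℝ) (β σ : ℝ) (u d : Euc n)
    (t : ℝ) : Prop :=
  ∃ l : ℕ, t = β ^ l ∧
    Th g γ w (u + (β ^ l) • d) ≤ (1 - 2 * σ * β ^ l) * Th g γ w u ∧
    ∀ l' < l, ¬ (Th g γ w (u + (β ^ l') • d) ≤ (1 - 2 * σ * β ^ l') * Th g γ w u)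

/-- The modified B-semismooth Newton iteration with Armijo damping. -/
def ModIter (g : Euc n → ℝ) (γ : ℝ) (w : Fin n → ℝ) (β σ : ℝ)
    (useq dseq : ℕ → Euc n) (tseq : ℕ → ℝ) : Prop :=
  (∀ j, IsModDir g γ w (useq j) (dseq j)) ∧
  (∀ j, ArmijoStepsize g γ w β σ (useq j) (dseq j) (tseq j)) ∧
  (∀ j, useq (j + 1) = useq j + tseq j • dseq j)

/-- The B-semismooth Newton iteration (unmodified index sets) with Armijo damping. -/
def BIter (g : Euc n → ℝ) (γ : ℝ) (w : Fin n → ℝ) (β σ : ℝ)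
    (useq dseq : ℕ → Euc n) (tseq : ℕ → ℝ) : Prop :=
  (∀ j, IsBDir g γ w (useq j) (dseq j)) ∧
  (∀ j, ArmijoStepsize g γ w β σ (useq j) (dseq j) (tseq j)) ∧
  (∀ j, useq (j + 1) = useq j + tseq j • dseq j)


/-! ### Auxiliary lemmas for `stmt10` -/

section Stmt10Aux

variable {g : Euc n → ℝ} {γ : ℝ} {w : Fin n → ℝ} {u d : Euc n}

lemma grad_apply' (g : Euc n → ℝ) (v : Euc n) (k : Fin n) :
    gradient g v k = fderiv ℝ g v (EuclideanSpace.single k 1) := by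
  have h : ⟪gradient g v, EuclideanSpace.single k 1⟫ = fderiv ℝ g v (EuclideanSpace.single k 1) :=
    InnerProductSpace.toDual_symm_apply
  rw [← h, EuclideanSpace.inner_single_right]
  simp

lemma hess_eq' (g : Euc n → ℝ) (hg : ContDiff ℝ 2 g) (u x : Euc n) (k : Fin n) :
    hess g u x k = fderiv ℝ (fderiv ℝ g) u x (EuclideanSpace.single k 1) := by
  have hf' : ContDiff ℝ 1 (fderiv ℝ g) := hg.fderiv_right (le_refl _)
  have hd : HasFDerivAt (fderiv ℝ g) (fderiv ℝ (fderiv ℝ g) u) u :=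
    (hf'.differentiable one_ne_zero u).hasFDerivAt
  set f'' := fderiv ℝ (fderiv ℝ g) u with hf''
  set e := (PiLp.continuousLinearEquiv 2 ℝ (fun _ : Fin n => ℝ)).symm with he
  set N : Euc n →L[ℝ] Euc n :=
    (e : (Fin n → ℝ) →L[ℝ] Euc n).comp
      (ContinuousLinearMap.pi fun k =>
        (ContinuousLinearMap.apply ℝ ℝ (EuclideanSpace.single k 1)).comp f'') with hN
  have key : HasFDerivAt (gradient g) N u := by
    have hfun : (gradient g) = fun v => e
        (fun k => fderiv ℝ g v (EuclideanSpace.single k 1)) := by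
      funext v; ext k; exact grad_apply' g v k
    rw [hfun]
    have hin : HasFDerivAt (fun v => (fun k => fderiv ℝ g v (EuclideanSpace.single k 1)))
        (ContinuousLinearMap.pi fun k =>
          (ContinuousLinearMap.apply ℝ ℝ (EuclideanSpace.single k 1)).comp f'') u := by
      apply hasFDerivAt_pi.2
      intro k
      exact ((ContinuousLinearMap.apply ℝ ℝ (EuclideanSpace.single k 1)).hasFDerivAt).comp u hd
    exact (e.hasFDerivAt).comp u hin
  have : fderiv ℝ (gradient g) u = N := key.fderiv
  rw [hess, this]
  rfl

lemma euc_sum_single' (y : Euc n) : (∑ k, y k • EuclideanSpace.single k (1:ℝ)) = y := by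
  ext j
  have h : (∑ k, y k • EuclideanSpace.single k (1:ℝ)) j
      = ∑ k, (y k • EuclideanSpace.single k (1:ℝ)) j := by rw [WithLp.ofLp_sum]; exact Finset.sum_apply j Finset.univ _
  rw [h]
  simp [EuclideanSpace.single_apply, Finset.sum_ite_eq', mul_comm]

lemma euc_inner' (x y : Euc n) : ⟪x, y⟫ = ∑ k, x k * y k := by
  simp [PiLp.inner_apply, RCLike.inner_apply, conj_trivial, mul_comm]

lemma hess_inner' (g : Euc n → ℝ) (hg : ContDiff ℝ 2 g) (u x y : Euc n) :
    ⟪hess g u x, y⟫ = fderiv ℝ (fderiv ℝ g) u x y := by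
  rw [euc_inner']
  have h2 : ∀ k, hess g u x k * y k
      = fderiv ℝ (fderiv ℝ g) u x (y k • EuclideanSpace.single k (1:ℝ)) := by
    intro k
    rw [hess_eq' g hg u x k, (fderiv ℝ (fderiv ℝ g) u x).map_smul]
    simp [mul_comm]
  simp_rw [h2, ← map_sum, euc_sum_single']

lemma hess_symm' (g : Euc n → ℝ) (hg : ContDiff ℝ 2 g) (u x y : Euc n) :
    ⟪hess g u x, y⟫ = ⟪hess g u y, x⟫ := by
  rw [hess_inner' g hg, hess_inner' g hg]
  have hf' : ContDiff ℝ 1 (fderiv ℝ g) := hg.fderiv_right (le_refl _)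
  exact second_derivative_symmetric
    (fun v => (hg.differentiable two_ne_zero v).hasFDerivAt)
    ((hf'.differentiable one_ne_zero u).hasFDerivAt) x y

lemma hess_add' (g : Euc n → ℝ) (u x y : Euc n) :
    hess g u (x + y) = hess g u x + hess g u y :=
  (fderiv ℝ (gradient g) u).map_add x y

lemma hess_smul' (g : Euc n → ℝ) (u : Euc n) (c : ℝ) (x : Euc n) :
    hess g u (c • x) = c • hess g u x :=
  (fderiv ℝ (gradient g) u).map_smul c x

/-- Cauchy–Schwarz-type bound for the Hessian quadratic form. -/
lemma hess_cs {c₁ c₂ : ℝ} (hg : Assump n g c₁ c₂) (u s t : Euc n) :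
    -⟪hess g u s, t⟫ ≤ c₂ * (‖s‖ * ‖t‖) := by
  have hc₂ : 0 < c₂ := lt_of_lt_of_le hg.c1_pos hg.c1_le_c2
  have hpos : ∀ x : Euc n, 0 ≤ ⟪hess g u x, x⟫ := fun x =>
    le_trans (mul_nonneg hg.c1_pos.le (sq_nonneg _)) (hg.lower u x)
  by_cases hs0 : s = 0
  · have : hess g u s = 0 := by
      rw [hs0]; exact (fderiv ℝ (gradient g) u).map_zero
    rw [this, inner_zero_left, neg_zero]
    positivity
  by_cases ht0 : t = 0
  · rw [ht0, inner_zero_right, neg_zero]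
    positivity
  have hsn : 0 < ‖s‖ := norm_pos_iff.2 hs0
  have htn : 0 < ‖t‖ := norm_pos_iff.2 ht0
  set lam : ℝ := ‖t‖ / ‖s‖ with hlam
  have hlam0 : 0 < lam := div_pos htn hsn
  have hls : lam * ‖s‖ = ‖t‖ := div_mul_cancel₀ _ (ne_of_gt hsn)
  have h0 := hpos (lam • s + t)
  have hexp : ⟪hess g u (lam • s + t), lam • s + t⟫
      = lam ^ 2 * ⟪hess g u s, s⟫ + 2 * lam * ⟪hess g u s, t⟫ + ⟪hess g u t, t⟫ := by
    rw [hess_add', hess_smul']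
    simp only [inner_add_left, inner_add_right, real_inner_smul_left, real_inner_smul_right]
    rw [hess_symm' g hg.contDiff u t s]
    ring
  rw [hexp] at h0
  have hu1 : ⟪hess g u s, s⟫ ≤ c₂ * ‖s‖ ^ 2 := hg.upper u s
  have hu2 : ⟪hess g u t, t⟫ ≤ c₂ * ‖t‖ ^ 2 := hg.upper u t
  have hls2 : lam ^ 2 * ‖s‖ ^ 2 = ‖t‖ ^ 2 := by rw [← hls]; ring
  have hlst : lam * (‖s‖ * ‖t‖) = ‖t‖ ^ 2 := by rw [← hls]; ring
  have h1 : lam ^ 2 * ⟪hess g u s, s⟫ ≤ lam ^ 2 * (c₂ * ‖s‖ ^ 2) :=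
    mul_le_mul_of_nonneg_left hu1 (sq_nonneg lam)
  have key : (2 * lam) * (-⟪hess g u s, t⟫) ≤ (2 * lam) * (c₂ * (‖s‖ * ‖t‖)) := by
    nlinarith [h0, h1, hu2, hls2, hlst]
  exact le_of_mul_le_mul_left key (by positivity)

lemma euc_norm_mono {x y : Euc n} (h : ∀ k, |x k| ≤ |y k|) : ‖x‖ ≤ ‖y‖ := by
  rw [EuclideanSpace.norm_eq, EuclideanSpace.norm_eq]
  apply Real.sqrt_le_sqrt
  apply Finset.sum_le_sum
  intro i _
  rw [Real.norm_eq_abs, Real.norm_eq_abs]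
  exact pow_le_pow_left₀ (abs_nonneg _) (h i) 2

lemma Fm_apply' (g : Euc n → ℝ) (γ : ℝ) (w : Fin n → ℝ) (u : Euc n) (k : Fin n) :
    Fm g γ w u k = u k - Real.sign (u k - γ * gradient g u k) *
      max (|u k - γ * gradient g u k| - γ * w k) 0 := by
  simp [Fm, soft, PiLp.sub_apply, PiLp.smul_apply, smul_eq_mul]

lemma Fm_small' {k : Fin n} (h : |u k - γ * gradient g u k| ≤ γ * w k) :
    Fm g γ w u k = u k := by
  rw [Fm_apply']
  rw [max_eq_right (by linarith)]
  ring

lemma Fm_big' {k : Fin n} (h : γ * w k < u k - γ * gradient g u k) (hω : 0 < γ * w k) :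
    Fm g γ w u k = γ * gradient g u k + γ * w k := by
  have hb : 0 < u k - γ * gradient g u k := lt_trans hω h
  rw [Fm_apply', Real.sign_of_pos hb, abs_of_pos hb, max_eq_left (by linarith)]
  ring

lemma Fm_negc' {k : Fin n} (h : u k - γ * gradient g u k < -(γ * w k)) (hω : 0 < γ * w k) :
    Fm g γ w u k = γ * gradient g u k - γ * w k := by
  have hb : u k - γ * gradient g u k < 0 := by linarith
  rw [Fm_apply', Real.sign_of_neg hb, abs_of_neg hb, max_eq_left (by linarith)]
  ring

/-- Componentwise dichotomy for a modified Newton direction. -/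
lemma mod_dichotomy {k : Fin n} (hγ : 0 < γ) (hw : ∀ j, 0 < w j)
    (hmd : IsModDir g γ w u d) :
    γ * hess g u d k = - Fm g γ w u k ∨ |d k| ≤ |Fm g γ w u k| := by
  obtain ⟨hA, hIz, hIp, hIm⟩ := hmd
  have hω : 0 < γ * w k := mul_pos hγ (hw k)
  set a := γ * gradient g u k with ha
  -- helper to process complementarity
  have comp : ∀ (h3 : (d k + u k) * (γ * hess g u d k + Fm g γ w u k) = 0)
      (habs : |u k| ≤ |Fm g γ w u k|),
      γ * hess g u d k = - Fm g γ w u k ∨ |d k| ≤ |Fm g γ w u k| := by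
    intro h3 habs
    rcases mul_eq_zero.1 h3 with h | h
    · right
      have : d k = - u k := by linarith
      rw [this, abs_neg]
      exact habs
    · left; linarith
  rcases lt_trichotomy (u k) (a - γ * w k) with hlt | heq | hgt
  · -- A⁻ region
    have hF : Fm g γ w u k = a - γ * w k := Fm_negc' (by simp only [← ha]; linarith) hω
    by_cases h0 : 0 < u k
    · -- k ∈ A⁻₋ ⊆ Ī⁻
      have hk : k ∈ ImiBar g γ w u := Or.inl (Or.inr ⟨h0, hlt⟩)
      obtain ⟨h1, h2, h3⟩ := hIm k hk
      refine comp h3 ?_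
      rw [hF, abs_of_pos h0, abs_of_pos (by linarith : (0:ℝ) < a - γ * w k)]
      linarith
    · -- k ∈ Ā⁻ ⊆ Ā
      have hk : k ∈ ABar g γ w u := Or.inr ⟨hlt, fun hc => h0 hc.1⟩
      exact Or.inl (hA k hk)
  · -- I⁻
    have hF : Fm g γ w u k = u k := by
      apply Fm_small'
      rw [← ha]
      have : u k - a = -(γ * w k) := by linarith
      rw [this, abs_neg, abs_of_pos hω]
    have hk : k ∈ ImiBar g γ w u := Or.inl (Or.inl heq)
    obtain ⟨h1, h2, h3⟩ := hIm k hk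
    exact comp h3 (by rw [hF])
  · rcases lt_trichotomy (u k) (a + γ * w k) with hlt2 | heq2 | hgt2
    · -- I° region
      have hF : Fm g γ w u k = u k := by
        apply Fm_small'
        rw [← ha, abs_le]
        constructor <;> linarith
      by_cases hp : a + γ * w k < 0
      · -- I°₊ ⊆ Ī⁺
        have hk : k ∈ IplBar g γ w u := Or.inr ⟨hgt, hlt2, hp⟩
        obtain ⟨h1, h2, h3⟩ := hIp k hk
        exact comp h3 (by rw [hF])
      · by_cases hm : 0 < a - γ * w k
        · -- I°₋ ⊆ Ī⁻
          have hk : k ∈ ImiBar g γ w u := Or.inr ⟨hm, hgt, hlt2⟩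
          obtain ⟨h1, h2, h3⟩ := hIm k hk
          exact comp h3 (by rw [hF])
        · -- Ī°
          have hk : k ∈ IzBar g γ w u := by
            refine ⟨⟨hgt, hlt2⟩, ?_⟩
            rintro (hc | hc)
            · exact hp hc.2.2
            · exact hm hc.1
          right
          rw [hIz k hk, abs_neg, hF]
    · -- I⁺
      have hF : Fm g γ w u k = u k := by
        apply Fm_small'
        rw [← ha]
        have : u k - a = γ * w k := by linarith
        rw [this, abs_of_pos hω]
      have hk : k ∈ IplBar g γ w u := Or.inl (Or.inl heq2)
      obtain ⟨h1, h2, h3⟩ := hIp k hk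
      exact comp h3 (by rw [hF])
    · -- A⁺ region
      have hF : Fm g γ w u k = a + γ * w k := Fm_big' (by simp only [← ha]; linarith) hω
      by_cases h0 : u k < 0
      · -- A⁺₊ ⊆ Ī⁺
        have hk : k ∈ IplBar g γ w u := Or.inl (Or.inr ⟨hgt2, h0⟩)
        obtain ⟨h1, h2, h3⟩ := hIp k hk
        refine comp h3 ?_
        rw [hF, abs_of_neg h0, abs_of_neg (by linarith : a + γ * w k < 0)]
        linarith
      · -- Ā⁺ ⊆ Ā
        have hk : k ∈ ABar g γ w u := Or.inl ⟨hgt2, fun hc => h0 hc.2⟩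
        exact Or.inl (hA k hk)

end Stmt10Aux

/-- uniform bound `‖d‖ ≤ C‖F(u)‖` for the modified Newton direction. -/
theorem stmt10 {n : ℕ} (hn : 1 ≤ n) (c₁ c₂ : ℝ) (g : Euc n → ℝ) (hg : Assump n g c₁ c₂)
    (w : Fin n → ℝ) (hw : ∀ k, 0 < w k) (γ : ℝ) (hγ : 0 < γ) :
    ∃ C : ℝ, 0 < C ∧
      ∀ u d : Euc n, IsModDir g γ w u d → ‖d‖ ≤ C * ‖Fm g γ w u‖ := by
  classical
  have hc₁ : 0 < c₁ := hg.c1_pos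
  have hc₂ : 0 < c₂ := lt_of_lt_of_le hc₁ hg.c1_le_c2
  set K : ℝ := 1 / γ + c₂ with hK
  have hKpos : 0 < K := by positivity
  refine ⟨1 + K / c₁, by positivity, ?_⟩
  intro u d hmd
  set F : Euc n := Fm g γ w u with hFdef
  have dich : ∀ k, γ * hess g u d k = - F k ∨ |d k| ≤ |F k| :=
    fun k => mod_dichotomy hγ hw hmd
  set P : Fin n → Prop := fun k => γ * hess g u d k = - F k with hP
  set s : Euc n := WithLp.toLp 2 (fun k => if P k then 0 else d k : Fin n → ℝ) with hs
  set t : Euc n := WithLp.toLp 2 (fun k => if P k then d k else 0 : Fin n → ℝ) with ht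
  have hst : s + t = d := by
    ext k
    have h1 : (s + t) k = s k + t k := rfl
    have h2 : s k = if P k then 0 else d k := rfl
    have h3 : t k = if P k then d k else 0 := rfl
    rw [h1, h2, h3]
    by_cases h : P k
    · rw [if_pos h, if_pos h]; ring
    · rw [if_neg h, if_neg h]; ring
  have hsk : ∀ k, |s k| ≤ |F k| := by
    intro k
    by_cases h : P k
    · have hz : s k = 0 := by rw [hs]; exact if_pos h
      rw [hz, abs_zero]
      exact abs_nonneg (F k)
    · have hz : s k = d k := by rw [hs]; exact if_neg h
      rw [hz]
      exact (dich k).resolve_left h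
  have hns : ‖s‖ ≤ ‖F‖ := euc_norm_mono hsk
  -- key inner-product identity
  have hMdt : ⟪hess g u d, t⟫ = -(1 / γ) * ⟪F, t⟫ := by
    rw [euc_inner', euc_inner', Finset.mul_sum]
    apply Finset.sum_congr rfl
    intro k _
    by_cases h : P k
    · have hk : γ * hess g u d k = - F k := h
      have htk : t k = d k := by rw [ht]; exact if_pos h
      rw [htk]
      have hγ' : γ ≠ 0 := ne_of_gt hγ
      field_simp
      linear_combination d k * hk
    · have htk : t k = 0 := by simp [ht, h]
      rw [htk]; ring
  have hMtt : ⟪hess g u t, t⟫ = ⟪hess g u d, t⟫ - ⟪hess g u s, t⟫ := by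
    have : hess g u d = hess g u s + hess g u t := by
      rw [← hst]; exact hess_add' g u s t
    rw [this, inner_add_left]; ring
  have hlow : c₁ * ‖t‖ ^ 2 ≤ ⟪hess g u t, t⟫ := hg.lower u t
  have hcs : -⟪hess g u s, t⟫ ≤ c₂ * (‖s‖ * ‖t‖) := hess_cs hg u s t
  have hFt : -(1 / γ) * ⟪F, t⟫ ≤ (1 / γ) * (‖F‖ * ‖t‖) := by
    have h1 : |⟪F, t⟫| ≤ ‖F‖ * ‖t‖ := abs_real_inner_le_norm F t
    have h2 : -⟪F, t⟫ ≤ ‖F‖ * ‖t‖ := le_trans (neg_le_abs _) h1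
    have hγ' : 0 ≤ 1 / γ := by positivity
    calc -(1 / γ) * ⟪F, t⟫ = (1 / γ) * (-⟪F, t⟫) := by ring
      _ ≤ (1 / γ) * (‖F‖ * ‖t‖) := mul_le_mul_of_nonneg_left h2 hγ'
  have hmain : c₁ * ‖t‖ ^ 2 ≤ K * (‖F‖ * ‖t‖) := by
    have h1 : c₁ * ‖t‖ ^ 2 ≤ (1 / γ) * (‖F‖ * ‖t‖) + c₂ * (‖s‖ * ‖t‖) := by
      rw [hMtt, hMdt] at hlow
      linarith [hlow, hcs, hFt]
    have h2 : c₂ * (‖s‖ * ‖t‖) ≤ c₂ * (‖F‖ * ‖t‖) :=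
      mul_le_mul_of_nonneg_left (mul_le_mul_of_nonneg_right hns (norm_nonneg t))
        (le_of_lt hc₂)
    calc c₁ * ‖t‖ ^ 2 ≤ (1 / γ) * (‖F‖ * ‖t‖) + c₂ * (‖F‖ * ‖t‖) := by linarith
      _ = K * (‖F‖ * ‖t‖) := by rw [hK]; ring
  have hnt : ‖t‖ ≤ K / c₁ * ‖F‖ := by
    rcases (norm_nonneg t).eq_or_lt' with h0 | h0
    · have h0' : ‖t‖ = 0 := h0
      rw [h0']
      positivity
    · have h1 : c₁ * ‖t‖ * ‖t‖ ≤ K * ‖F‖ * ‖t‖ := by nlinarith [hmain]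
      have h2 : c₁ * ‖t‖ ≤ K * ‖F‖ := le_of_mul_le_mul_right (by linarith) h0
      rw [div_mul_eq_mul_div, le_div_iff₀ hc₁]
      linarith
  calc ‖d‖ = ‖s + t‖ := by rw [hst]
    _ ≤ ‖s‖ + ‖t‖ := norm_add_le s t
    _ ≤ ‖F‖ + K / c₁ * ‖F‖ := add_le_add hns hnt
    _ = (1 + K / c₁) * ‖F‖ := by ring
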